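/- For every n ≥ 1 and b < 2^n, the parity of T^[n](2^n * a + b) depends on a: precisely, T^[n](b) and T^[n](2^n + b) = T^[n](b) + 3^(m(b,n)) have opposite parities. -/

import Mathlib

def T (N : ℕ) : ℕ := if N % 2 = 0 then N / 2 else (3 * N + 1) / 2

def m (b n : ℕ) : ℕ := ((Finset.range n).filter (fun k => Odd (T^[k] b))).card

lemma m_succ (b n : ℕ) : m b (n+1) = m b n + if Odd (T^[n] b) then 1 else 0 := by
  simp only [m, Finset.range_add_one, Finset.filter_insert]
  split
  · rw [Finset.card_insert_of_notMem (by simp)]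
  · simp

lemma m_shift (b n : ℕ) : m b (n+1) = m (T b) n + (if Odd b then 1 else 0) := by
  induction n with
  | zero =>
      simp [m, Finset.range_one, Finset.filter_singleton]
      split <;> rename_i h <;> simp only [h, if_true, if_false, Finset.card_singleton, Finset.card_empty]
  | succ n ih =>
      rw [m_succ b (n+1), ih, m_succ (T b) n, Function.iterate_succ_apply]
      ring

lemma key (n : ℕ) : ∀ c b, T^[n] (c * 2 ^ n + b) = T^[n] b + c * 3 ^ (m b n) := by
  induction n with
  | zero => intro c b; simp [m]; omega
  | succ n ih =>
      intro c b
      rw [Function.iterate_succ_apply, Function.iterate_succ_apply, m_shift]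
      have h2 : c * 2 ^ (n+1) = 2 * (c * 2 ^ n) := by ring
      have h3 : (3 * c) * 2 ^ n = 3 * (c * 2 ^ n) := by ring
      rcases Nat.even_or_odd b with hb | hb
      · have hb2 : b % 2 = 0 := Nat.even_iff.mp hb
        have h1 : T (c * 2 ^ (n+1) + b) = c * 2 ^ n + T b := by
          simp only [T, h2]
          generalize c * 2 ^ n = d
          have : (2 * d + b) % 2 = 0 := by omega
          rw [if_pos this, if_pos hb2]
          omega
        rw [h1, ih c (T b), if_neg (Nat.not_odd_iff_even.mpr hb)]
        norm_num
      · have hb2 : b % 2 = 1 := Nat.odd_iff.mp hb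
        have h1 : T (c * 2 ^ (n+1) + b) = (3 * c) * 2 ^ n + T b := by
          simp only [T, h2, h3]
          generalize c * 2 ^ n = d
          rw [if_neg (by omega), if_neg (by omega)]
          omega
        rw [h1, ih (3 * c) (T b), if_pos hb]
        ring

theorem stmt19 : ∀ n ≥ 1, ∀ b < 2 ^ n,
    T^[n] (2 ^ n + b) = T^[n] b + 3 ^ m b n ∧
    (Odd (T^[n] b) ↔ Even (T^[n] (2 ^ n + b))) := by
  intro n _ b _
  have h := key n 1 b
  simp only [one_mul] at h
  refine ⟨h, ?_⟩
  have h3 : (3:ℕ) ^ m b n % 2 = 1 := Nat.odd_iff.mp (Odd.pow (by decide))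
  rw [h, Nat.odd_iff, Nat.even_iff]
  omega
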